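/- Let n, d be natural numbers, let Φ be a real n×d matrix, let c > 0 and Γ > 0 be real numbers, let v, p ∈ ℝ^d with ‖p‖² ≤ Γ (Euclidean norm), and let ε ∈ ℝ^n. Then |vᵀ p − (Φ v)ᵀ (Φ Φᵀ + c I)⁻¹ (Φ p + ε)| ≤ √(vᵀ v − (Φ v)ᵀ (Φ Φᵀ + c I)⁻¹ Φ v) · (√Γ + (1/√c) · √(εᵀ Φ Φᵀ (Φ Φᵀ + c I)⁻¹ ε)). -/

import Mathlib

open Matrix

private lemma mulVec_dot_swap {a b : ℕ} (X : Matrix (Fin a) (Fin b) ℝ)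
    (z : Fin b → ℝ) (w : Fin a → ℝ) : (X *ᵥ z) ⬝ᵥ w = z ⬝ᵥ (Xᵀ *ᵥ w) := by
  rw [dotProduct_mulVec z, vecMul_transpose]

private lemma dot_symm' {k : ℕ} (M : Matrix (Fin k) (Fin k) ℝ) (hsym : Mᵀ = M)
    (x y : Fin k → ℝ) : x ⬝ᵥ M *ᵥ y = y ⬝ᵥ M *ᵥ x := by
  rw [dotProduct_mulVec, ← mulVec_transpose, hsym, dotProduct_comm]

private lemma cs_psd {k : ℕ} (M : Matrix (Fin k) (Fin k) ℝ) (hsym : Mᵀ = M)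
    (hpsd : ∀ x, 0 ≤ x ⬝ᵥ M *ᵥ x) (x y : Fin k → ℝ) :
    |x ⬝ᵥ M *ᵥ y| ≤ Real.sqrt (x ⬝ᵥ M *ᵥ x) * Real.sqrt (y ⬝ᵥ M *ᵥ y) := by
  have key : ∀ t : ℝ, 0 ≤ (y ⬝ᵥ M *ᵥ y) * (t * t) + (2 * (x ⬝ᵥ M *ᵥ y)) * t + (x ⬝ᵥ M *ᵥ x) := by
    intro t
    have h := hpsd (x + t • y)
    have hyx : y ⬝ᵥ M *ᵥ x = x ⬝ᵥ M *ᵥ y := dot_symm' M hsym y x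
    simp only [dotProduct_add, add_dotProduct, mulVec_add, mulVec_smul, dotProduct_smul,
      smul_dotProduct, smul_eq_mul, hyx] at h
    nlinarith [h]
  have hd := discrim_le_zero key
  rw [discrim] at hd
  have hsq : (x ⬝ᵥ M *ᵥ y) ^ 2 ≤ (x ⬝ᵥ M *ᵥ x) * (y ⬝ᵥ M *ᵥ y) := by nlinarith [hd]
  calc |x ⬝ᵥ M *ᵥ y| ≤ Real.sqrt ((x ⬝ᵥ M *ᵥ x) * (y ⬝ᵥ M *ᵥ y)) := Real.abs_le_sqrt hsq
    _ = _ := Real.sqrt_mul (hpsd x) _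

theorem corollary1_deterministic_bound (n d : ℕ) (Φ : Matrix (Fin n) (Fin d) ℝ) (c Γ : ℝ)
    (hc : 0 < c) (hΓ : 0 < Γ) (v p : Fin d → ℝ) (hp : p ⬝ᵥ p ≤ Γ) (ε : Fin n → ℝ) :
    |v ⬝ᵥ p - (Φ *ᵥ v) ⬝ᵥ ((Φ * Φᵀ + c • (1 : Matrix (Fin n) (Fin n) ℝ))⁻¹ *ᵥ (Φ *ᵥ p + ε))| ≤
      Real.sqrt (v ⬝ᵥ v -
          (Φ *ᵥ v) ⬝ᵥ ((Φ * Φᵀ + c • (1 : Matrix (Fin n) (Fin n) ℝ))⁻¹ *ᵥ (Φ *ᵥ v))) *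
        (Real.sqrt Γ + (1 / Real.sqrt c) *
          Real.sqrt (ε ⬝ᵥ ((Φ * Φᵀ * (Φ * Φᵀ + c • (1 : Matrix (Fin n) (Fin n) ℝ))⁻¹) *ᵥ ε))) := by
  set A : Matrix (Fin n) (Fin n) ℝ := Φ * Φᵀ + c • 1 with hAdef
  set B : Matrix (Fin d) (Fin d) ℝ := Φᵀ * Φ + c • 1 with hBdef
  have hΦΦ : (Φ * Φᵀ).PosSemidef := by simpa using posSemidef_self_mul_conjTranspose Φ
  have hΦΦ' : (Φᵀ * Φ).PosSemidef := by simpa using posSemidef_conjTranspose_mul_self Φ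
  have hcI : ∀ k : ℕ, (c • (1 : Matrix (Fin k) (Fin k) ℝ)).PosDef := by
    intro k
    have h1 : (1 : Matrix (Fin k) (Fin k) ℝ).PosDef := Matrix.PosDef.one
    refine Matrix.PosDef.of_dotProduct_mulVec_pos (by simp [Matrix.IsHermitian]) fun x hx => ?_
    have := h1.dotProduct_mulVec_pos hx
    simp only [Matrix.smul_mulVec, dotProduct_smul, smul_eq_mul]
    exact mul_pos hc (by simpa using this)
  have hA : A.PosDef := Matrix.PosDef.posSemidef_add hΦΦ (hcI n)
  have hB : B.PosDef := Matrix.PosDef.posSemidef_add hΦΦ' (hcI d)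
  have hAd : IsUnit A.det := (Matrix.isUnit_iff_isUnit_det A).mp hA.isUnit
  have hBd : IsUnit B.det := (Matrix.isUnit_iff_isUnit_det B).mp hB.isUnit
  have hAAi : A * A⁻¹ = 1 := mul_nonsing_inv A hAd
  have hAiA : A⁻¹ * A = 1 := nonsing_inv_mul A hAd
  have hBiB : B⁻¹ * B = 1 := nonsing_inv_mul B hBd
  have hAt : Aᵀ = A := by
    rw [hAdef]; simp [Matrix.transpose_add, Matrix.transpose_mul, Matrix.transpose_smul]
  have hBt : Bᵀ = B := by
    rw [hBdef]; simp [Matrix.transpose_add, Matrix.transpose_mul, Matrix.transpose_smul]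
  have hAit : (A⁻¹)ᵀ = A⁻¹ := by rw [Matrix.transpose_nonsing_inv, hAt]
  have hBit : (B⁻¹)ᵀ = B⁻¹ := by rw [Matrix.transpose_nonsing_inv, hBt]
  have k1 : B * Φᵀ = Φᵀ * A := by
    rw [hAdef, hBdef]
    simp [Matrix.add_mul, Matrix.mul_add, Matrix.smul_mul, Matrix.mul_smul, Matrix.mul_assoc]
  have k2 : Φᵀ * A⁻¹ = B⁻¹ * Φᵀ := by
    calc Φᵀ * A⁻¹ = (B⁻¹ * B) * Φᵀ * A⁻¹ := by rw [hBiB, Matrix.one_mul]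
      _ = B⁻¹ * (Φᵀ * A) * A⁻¹ := by rw [← k1]; simp only [Matrix.mul_assoc]
      _ = B⁻¹ * Φᵀ * (A * A⁻¹) := by simp only [Matrix.mul_assoc]
      _ = B⁻¹ * Φᵀ := by rw [hAAi, Matrix.mul_one]
  set M : Matrix (Fin d) (Fin d) ℝ := 1 - Φᵀ * A⁻¹ * Φ with hMdef
  have k3 : M = c • B⁻¹ := by
    rw [hMdef]
    have h : Φᵀ * A⁻¹ * Φ = B⁻¹ * (Φᵀ * Φ) := by rw [k2]; simp only [Matrix.mul_assoc]
    rw [h]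
    have hsub : Φᵀ * Φ = B - c • 1 := by rw [hBdef]; abel
    rw [hsub, Matrix.mul_sub, hBiB, Matrix.mul_smul, Matrix.mul_one]
    abel
  have k4 : (Φᵀ * A⁻¹)ᵀ * B * (Φᵀ * A⁻¹) = Φ * Φᵀ * A⁻¹ := by
    have comm : Φ * Φᵀ * A = A * (Φ * Φᵀ) := by
      rw [hAdef]
      simp [Matrix.add_mul, Matrix.mul_add, Matrix.smul_mul, Matrix.mul_smul, Matrix.mul_assoc]
    calc (Φᵀ * A⁻¹)ᵀ * B * (Φᵀ * A⁻¹)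
        = A⁻¹ * (Φ * (B * Φᵀ * A⁻¹)) := by
          rw [Matrix.transpose_mul, Matrix.transpose_transpose, hAit]
          simp only [Matrix.mul_assoc]
      _ = A⁻¹ * (Φ * (Φᵀ * (A * A⁻¹))) := by rw [k1]; simp only [Matrix.mul_assoc]
      _ = A⁻¹ * (Φ * Φᵀ) := by rw [hAAi, Matrix.mul_one]
      _ = A⁻¹ * (Φ * Φᵀ) * (A * A⁻¹) := by rw [hAAi, Matrix.mul_one]
      _ = A⁻¹ * (Φ * Φᵀ * A) * A⁻¹ := by simp only [Matrix.mul_assoc]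
      _ = A⁻¹ * (A * (Φ * Φᵀ)) * A⁻¹ := by rw [comm]
      _ = (A⁻¹ * A) * ((Φ * Φᵀ) * A⁻¹) := by simp only [Matrix.mul_assoc]
      _ = Φ * Φᵀ * A⁻¹ := by rw [hAiA, Matrix.one_mul]
  -- symmetry and positive semidefiniteness of M
  have hMt : Mᵀ = M := by rw [k3, Matrix.transpose_smul, hBit]
  have hBinn : ∀ x : Fin d → ℝ, 0 ≤ x ⬝ᵥ B⁻¹ *ᵥ x := by
    intro x
    have := hB.inv.posSemidef.dotProduct_mulVec_nonneg x
    simpa using this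
  have hMpsd : ∀ x : Fin d → ℝ, 0 ≤ x ⬝ᵥ M *ᵥ x := by
    intro x
    rw [k3]
    simp only [Matrix.smul_mulVec, dotProduct_smul, smul_eq_mul]
    exact mul_nonneg hc.le (hBinn x)
  -- quadratic form expansion
  have qd : ∀ x y : Fin d → ℝ,
      x ⬝ᵥ M *ᵥ y = x ⬝ᵥ y - (Φ *ᵥ x) ⬝ᵥ (A⁻¹ *ᵥ (Φ *ᵥ y)) := by
    intro x y
    rw [hMdef, Matrix.sub_mulVec, Matrix.one_mulVec, dotProduct_sub]
    congr 1
    rw [← Matrix.mulVec_mulVec, ← Matrix.mulVec_mulVec, ← mulVec_dot_swap Φ x]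
  -- the noise direction vector
  set u : Fin d → ℝ := (Φᵀ * A⁻¹) *ᵥ ε with hudef
  set w : Fin d → ℝ := c⁻¹ • (B *ᵥ u) with hwdef
  have e1 : M *ᵥ w = u := by
    rw [k3, hwdef, Matrix.mulVec_smul, Matrix.smul_mulVec, smul_smul,
      inv_mul_cancel₀ hc.ne', one_smul, Matrix.mulVec_mulVec, hBiB, Matrix.one_mulVec]
  have vMw : v ⬝ᵥ M *ᵥ w = (Φ *ᵥ v) ⬝ᵥ (A⁻¹ *ᵥ ε) := by
    rw [e1, hudef, ← Matrix.mulVec_mulVec, ← mulVec_dot_swap Φ v]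
  have wMw : w ⬝ᵥ M *ᵥ w = c⁻¹ * (ε ⬝ᵥ ((Φ * Φᵀ * A⁻¹) *ᵥ ε)) := by
    rw [e1, hwdef]
    simp only [smul_dotProduct, smul_eq_mul]
    congr 1
    calc (B *ᵥ u) ⬝ᵥ u = u ⬝ᵥ (B *ᵥ u) := dotProduct_comm _ _
      _ = ((Φᵀ * A⁻¹) *ᵥ ε) ⬝ᵥ ((B * (Φᵀ * A⁻¹)) *ᵥ ε) := by
          rw [hudef, Matrix.mulVec_mulVec]
      _ = ε ⬝ᵥ (((Φᵀ * A⁻¹)ᵀ * (B * (Φᵀ * A⁻¹))) *ᵥ ε) := by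
          rw [mulVec_dot_swap, Matrix.mulVec_mulVec]
      _ = ε ⬝ᵥ ((Φ * Φᵀ * A⁻¹) *ᵥ ε) := by
          rw [← Matrix.mul_assoc, k4]
  -- main decomposition
  have hsplit : v ⬝ᵥ p - (Φ *ᵥ v) ⬝ᵥ (A⁻¹ *ᵥ (Φ *ᵥ p + ε))
      = (v ⬝ᵥ M *ᵥ p) - (v ⬝ᵥ M *ᵥ w) := by
    rw [qd v p, vMw, Matrix.mulVec_add, dotProduct_add]
    ring
  -- bounds
  have hq : 0 ≤ (Φ *ᵥ p) ⬝ᵥ (A⁻¹ *ᵥ (Φ *ᵥ p)) := by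
    have := hA.inv.posSemidef.dotProduct_mulVec_nonneg (Φ *ᵥ p)
    simpa using this
  have hpMp : p ⬝ᵥ M *ᵥ p ≤ Γ := by
    rw [qd p p]; linarith
  have h1 : |v ⬝ᵥ M *ᵥ p| ≤ Real.sqrt (v ⬝ᵥ M *ᵥ v) * Real.sqrt Γ := by
    refine (cs_psd M hMt hMpsd v p).trans ?_
    exact mul_le_mul_of_nonneg_left (Real.sqrt_le_sqrt hpMp) (Real.sqrt_nonneg _)
  have h2 : |v ⬝ᵥ M *ᵥ w| ≤ Real.sqrt (v ⬝ᵥ M *ᵥ v) *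
      ((1 / Real.sqrt c) * Real.sqrt (ε ⬝ᵥ ((Φ * Φᵀ * A⁻¹) *ᵥ ε))) := by
    refine (cs_psd M hMt hMpsd v w).trans ?_
    refine mul_le_mul_of_nonneg_left (le_of_eq ?_) (Real.sqrt_nonneg _)
    rw [wMw, Real.sqrt_mul (inv_nonneg.mpr hc.le), Real.sqrt_inv, one_div]
  have hvMv : v ⬝ᵥ v - (Φ *ᵥ v) ⬝ᵥ (A⁻¹ *ᵥ (Φ *ᵥ v)) = v ⬝ᵥ M *ᵥ v := (qd v v).symm
  rw [hvMv, hsplit]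
  calc |(v ⬝ᵥ M *ᵥ p) - (v ⬝ᵥ M *ᵥ w)| ≤ |v ⬝ᵥ M *ᵥ p| + |v ⬝ᵥ M *ᵥ w| := abs_sub _ _
    _ ≤ Real.sqrt (v ⬝ᵥ M *ᵥ v) * Real.sqrt Γ + Real.sqrt (v ⬝ᵥ M *ᵥ v) *
        ((1 / Real.sqrt c) * Real.sqrt (ε ⬝ᵥ ((Φ * Φᵀ * A⁻¹) *ᵥ ε))) := add_le_add h1 h2
    _ = _ := by rw [mul_add]
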